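/- No HDT0L system over an alphabet Σ with at least two letters computes w ↦ w^{|w|}: if |Σ| ≥ 2, there is no tuple (Δ, d, (h_c)_{c∈Σ}, h') with Δ finite, d ∈ Δ*, monoid morphisms h_c : Δ* → Δ* and h' : Δ* → Σ* such that h'(h_{w₁} ∘ ⋯ ∘ h_{w_n}(d)) = w^{|w|} for every w = w₁ ⋯ w_n ∈ Σ*. -/

import Mathlib

open List

lemma first_occ {α : Type*} [DecidableEq α] {b : α} {l : List α} (hb : b ∈ l) :
    ∃ s t, l = s ++ b :: t ∧ b ∉ s := by
  induction l with
  | nil => simp at hb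
  | cons x xs ih =>
    by_cases hx : x = b
    · exact ⟨[], xs, by simp [hx], by simp⟩
    · rcases List.mem_cons.mp hb with h1 | h1
      · exact absurd h1.symm hx
      · obtain ⟨s, t, rfl, hbs⟩ := ih h1
        refine ⟨x :: s, t, rfl, ?_⟩
        simp [hbs]
        exact fun h => hx h.symm

lemma two_b {α : Type*} [DecidableEq α] {b : α} {l : List α} (h2 : 2 ≤ l.count b) :
    ∃ x y z, l = x ++ b :: (y ++ b :: z) ∧ b ∉ y := by
  have hb : b ∈ l := List.count_pos_iff.mp (by omega)
  obtain ⟨s, t, rfl, hbs⟩ := first_occ hb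
  have hcs : s.count b = 0 := List.count_eq_zero.mpr hbs
  have h2' : 1 ≤ t.count b := by
    rw [List.count_append, List.count_cons_self, hcs] at h2; omega
  have hbt : b ∈ t := List.count_pos_iff.mp (by omega)
  obtain ⟨y, z, rfl, hby⟩ := first_occ hbt
  exact ⟨s, y, z, rfl, hby⟩

lemma count_take_blocks {α : Type*} [DecidableEq α] {a b : α} (hab : a ≠ b) (m : ℕ) :
    ∀ (k L : ℕ), (((List.replicate k (List.replicate m a ++ [b])).flatten).take L).count b
      = min (L / (m+1)) k := by
  intro k
  induction k with
  | zero => intro L; simp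
  | succ k ih =>
    intro L
    have hrep : List.replicate (k+1) (List.replicate m a ++ [b])
        = (List.replicate m a ++ [b]) :: List.replicate k (List.replicate m a ++ [b]) := rfl
    have hclen : (List.replicate m a ++ [b]).length = m + 1 := by simp
    rw [hrep, List.flatten_cons, List.take_append, List.count_append, hclen]
    rcases le_or_gt L m with hL | hL
    · have h1 : L - (m+1) = 0 := by omega
      have h2 : L / (m+1) = 0 := Nat.div_eq_of_lt (by omega)
      rw [h1, h2]
      have h3 : (List.replicate m a ++ [b]).take L = List.replicate (min L m) a := by
        rw [List.take_append, List.take_replicate]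
        have : L - (List.replicate m a).length = 0 := by simp; omega
        rw [this]; simp
      rw [h3]
      simp [List.count_replicate, Ne.symm hab]
      exact fun h => absurd h hab
    · have h4 : (List.replicate m a ++ [b]).take L = List.replicate m a ++ [b] :=
        List.take_of_length_le (by omega)
      rw [h4, ih, List.count_append]
      have h5 : (List.replicate m a).count b = 0 := by
        simp [List.count_replicate, Ne.symm hab]
        exact fun h => absurd h hab
      have h6 : L / (m+1) = (L - (m+1)) / (m+1) + 1 :=
        Nat.div_eq_sub_div (by omega) (by omega)
      rw [h5, h6]
      simp
      omega

lemma gap_eq {α : Type*} [DecidableEq α] {a b : α} (hab : a ≠ b) (m : ℕ)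
    {s y z : List α}
    (hu : (List.replicate (m+1) (List.replicate m a ++ [b])).flatten = s ++ b :: (y ++ b :: z))
    (hy : b ∉ y) : y.length = m := by
  set u := (List.replicate (m+1) (List.replicate m a ++ [b])).flatten with hudef
  have key : ∀ L, (u.take L).count b = min (L / (m+1)) (m+1) :=
    fun L => count_take_blocks hab m (m+1) L
  set P := s.length with hP
  set Y := y.length with hY
  set cs := s.count b with hcs
  have hcy : y.count b = 0 := List.count_eq_zero.mpr hy
  have hu1 : u = (s ++ [b]) ++ (y ++ b :: z) := by rw [hu]; simp
  have hu2 : u = ((s ++ [b]) ++ y) ++ (b :: z) := by rw [hu]; simp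
  have hu3 : u = (((s ++ [b]) ++ y) ++ [b]) ++ z := by rw [hu]; simp
  have E0 : min (P / (m+1)) (m+1) = cs := by
    have h := key s.length
    rw [hu, List.take_left] at h
    exact h.symm
  have E1 : min ((P + 1) / (m+1)) (m+1) = cs + 1 := by
    have h := key (s ++ [b]).length
    rw [hu1, List.take_left] at h
    have hl : (s ++ [b]).length = P + 1 := by simp; omega
    rw [hl] at h
    simpa [List.count_append] using h.symm
  have E2 : min ((P + 1 + Y) / (m+1)) (m+1) = cs + 1 := by
    have h := key ((s ++ [b]) ++ y).length
    rw [hu2, List.take_left] at h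
    have hl : ((s ++ [b]) ++ y).length = P + 1 + Y := by simp; omega
    rw [hl] at h
    simpa [List.count_append, hcy] using h.symm
  have E3 : min ((P + 1 + Y + 1) / (m+1)) (m+1) = cs + 1 + 1 := by
    have h := key ((((s ++ [b]) ++ y) ++ [b])).length
    rw [hu3, List.take_left] at h
    have hl : ((((s ++ [b]) ++ y) ++ [b])).length = P + 1 + Y + 1 := by simp; omega
    rw [hl] at h
    simpa [List.count_append, hcy] using h.symm
  have hd1 : (m+1) ∣ (P+1) := by
    by_contra hnd
    have hs := Nat.succ_div (a := P) (b := m+1)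
    rw [if_neg hnd] at hs
    rw [hs] at E1
    omega
  obtain ⟨q, hq⟩ := hd1
  have hq1 : (P+1)/(m+1) = q := by rw [hq]; exact Nat.mul_div_cancel_left q (by omega)
  have hd2 : (m+1) ∣ (P+1+Y+1) := by
    by_contra hnd
    have hs := Nat.succ_div (a := P+1+Y) (b := m+1)
    rw [if_neg hnd] at hs
    rw [hs] at E3
    omega
  obtain ⟨r, hr⟩ := hd2
  have hr1 : (P+1+Y+1)/(m+1) = r := by rw [hr]; exact Nat.mul_div_cancel_left r (by omega)
  have hr2 : (P+1+Y)/(m+1) = r - 1 := by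
    have hs := Nat.succ_div (a := P+1+Y) (b := m+1)
    rw [if_pos ⟨r, hr⟩] at hs
    omega
  rw [hq1] at E1
  rw [hr2] at E2
  rw [hr1] at E3
  have hrr : r = q + 1 := by
    rw [min_def] at E1 E2 E3
    split_ifs at E1 E2 E3 <;> omega
  have hfin : P + 1 + Y + 1 = (P + 1) + (m + 1) := by
    rw [hr, hrr, Nat.mul_add, Nat.mul_one, ← hq]
  omega

lemma pigeon2 {Δ : Type*} (f : Δ → ℕ) :
    ∀ (l : List Δ), l.length < (l.map f).sum → ∃ δ ∈ l, 2 ≤ f δ := by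
  intro l
  induction l with
  | nil => simp
  | cons x t ih =>
    intro hlt
    by_cases hx : 2 ≤ f x
    · exact ⟨x, by simp, hx⟩
    · obtain ⟨δ, hδ, h2⟩ := ih (by simp at hlt; omega)
      exact ⟨δ, by simp [hδ], h2⟩

lemma infix_of_mem {Δ S : Type*} (F : Δ → List S) {δ : Δ} {l : List Δ} (hm : δ ∈ l) :
    ∃ s t, (l.map F).flatten = s ++ F δ ++ t := by
  obtain ⟨s', t', rfl⟩ := List.append_of_mem hm
  refine ⟨(s'.map F).flatten, (t'.map F).flatten, ?_⟩
  simp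

/-- No HDT0L system over an alphabet with at least two letters computes `w ↦ w^{|w|}`. -/
theorem hdt0l_not_wpow {S Δ : Type*} [Fintype S] [Fintype Δ]
    (hcard : 2 ≤ Fintype.card S)
    (d : List Δ) (h : S → List Δ → List Δ) (h' : List Δ → List S)
    (hh : ∀ (c : S) (x y : List Δ), h c (x ++ y) = h c x ++ h c y)
    (hh' : ∀ x y : List Δ, h' (x ++ y) = h' x ++ h' y) :
    ¬ ∀ w : List S,
        h' (w.foldr (fun c acc => h c acc) d) = (List.replicate w.length w).flatten := by
  classical
  intro H
  obtain ⟨a, b, hab⟩ := Fintype.exists_pair_of_one_lt_card (α := S) (by omega)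
  set g : List Δ → List Δ := h a with hgdef
  have hg_nil : g [] = [] := by
    have h0 : g ([] ++ []) = g [] ++ g [] := hh a [] []
    simp only [List.append_nil] at h0
    have := congrArg List.length h0
    simp only [List.length_append] at this
    have hz : (g []).length = 0 := by omega
    exact List.eq_nil_of_length_eq_zero hz
  have h'_nil : h' [] = [] := by
    have h0 : h' ([] ++ []) = h' [] ++ h' [] := hh' [] []
    simp only [List.append_nil] at h0
    have := congrArg List.length h0
    simp only [List.length_append] at this
    have hz : (h' []).length = 0 := by omega
    exact List.eq_nil_of_length_eq_zero hz
  have hiter_m : ∀ (n : ℕ) (x y : List Δ), g^[n] (x ++ y) = g^[n] x ++ g^[n] y := by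
    intro n
    induction n with
    | zero => simp
    | succ n ih =>
      intro x y
      rw [Function.iterate_succ_apply', Function.iterate_succ_apply',
        Function.iterate_succ_apply', ih]
      exact hh a _ _
  have hiter_nil : ∀ n : ℕ, g^[n] ([] : List Δ) = [] := by
    intro n
    induction n with
    | zero => simp
    | succ n ih => rw [Function.iterate_succ_apply', ih, hg_nil]
  -- decomposition of h' ∘ g^[n] over letters
  have hM : ∀ (n : ℕ) (l : List Δ),
      h' (g^[n] l) = (l.map (fun δ => h' (g^[n] [δ]))).flatten := by
    intro n l
    induction l with
    | nil => simp [hiter_nil, h'_nil]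
    | cons δ t ih =>
      have hsplit : (δ :: t) = [δ] ++ t := rfl
      rw [hsplit, hiter_m, hh', ih]
      simp
  -- evaluation of the fold on inputs aᵐ b
  have hrepfold : ∀ (m : ℕ) (x : List Δ),
      (List.replicate m a).foldr (fun c acc => h c acc) x = g^[m] x := by
    intro m
    induction m with
    | zero => intro x; simp
    | succ m ih =>
      intro x
      rw [List.replicate_succ, List.foldr_cons, ih, Function.iterate_succ_apply']
  set d' : List Δ := h b d with hd'
  have hu : ∀ n j : ℕ, ((g^[j] d').map (fun δ => h' (g^[n] [δ]))).flatten
      = (List.replicate (n+j+1) (List.replicate (n+j) a ++ [b])).flatten := by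
    intro n j
    have hw := H (List.replicate (n+j) a ++ [b])
    rw [List.foldr_append] at hw
    simp only [List.foldr_cons, List.foldr_nil] at hw
    rw [hrepfold] at hw
    have hlen : (List.replicate (n+j) a ++ [b]).length = n + j + 1 := by simp
    rw [hlen] at hw
    have hadd : g^[n+j] (h b d) = g^[n] (g^[j] d') := by
      rw [hd', Function.iterate_add_apply]
    rw [hadd, hM] at hw
    exact hw
  -- count of b's
  have hcount : ∀ n j : ℕ,
      ((g^[j] d').map (fun δ => (h' (g^[n] [δ])).count b)).sum = n + j + 1 := by
    intro n j
    have hc := congrArg (List.count b) (hu n j)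
    rw [List.count_flatten, List.count_flatten, List.map_map, List.map_replicate,
      List.sum_replicate] at hc
    have hone : (List.replicate (n+j) a ++ [b]).count b = 1 := by
      rw [List.count_append]
      simp [List.count_replicate, Ne.symm hab]
      exact fun hq => absurd hq hab
    rw [hone] at hc
    simpa [Function.comp_def, smul_eq_mul] using hc
  set D := Fintype.card Δ with hD
  set N := Finset.sup (Finset.range (D+1)) (fun j => (g^[j] d').length) with hN
  have hNj : ∀ j, j ≤ D → (g^[j] d').length ≤ N := by
    intro j hj
    rw [hN]
    exact Finset.le_sup (f := fun j => (g^[j] d').length) (Finset.mem_range.mpr (by omega))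
  have hex : ∀ j, j ≤ D → ∃ δ ∈ g^[j] d', 2 ≤ (h' (g^[N] [δ])).count b := by
    intro j hj
    refine pigeon2 (fun δ => (h' (g^[N] [δ])).count b) _ ?_
    rw [hcount N j]
    have := hNj j hj
    omega
  have hgap : ∀ (j : ℕ) (δ : Δ), δ ∈ g^[j] d' → 2 ≤ (h' (g^[N] [δ])).count b →
      ∀ (y : List S), b ∉ y →
        (∀ x z, h' (g^[N] [δ]) ≠ x ++ b :: (y ++ b :: z)) ∨ y.length = N + j := by
    intro j δ hmem h2 y hby
    by_cases hcase : ∃ x z, h' (g^[N] [δ]) = x ++ b :: (y ++ b :: z)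
    · right
      obtain ⟨x, z, hxz⟩ := hcase
      obtain ⟨s, t, hst⟩ := infix_of_mem (fun δ => h' (g^[N] [δ])) hmem
      have huj := hu N j
      rw [hst, hxz] at huj
      have hshape : (List.replicate ((N+j)+1) (List.replicate (N+j) a ++ [b])).flatten
          = (s ++ x) ++ b :: (y ++ b :: (z ++ t)) := by
        rw [← huj]
        simp
      exact gap_eq hab (N+j) hshape hby
    · left
      push_neg at hcase
      exact hcase
  -- choose the witnesses
  have hexFin : ∀ j : Fin (D+1), ∃ δ, δ ∈ g^[(j : ℕ)] d' ∧ 2 ≤ (h' (g^[N] [δ])).count b := by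
    intro j
    obtain ⟨δ, h1, h2⟩ := hex j (by omega)
    exact ⟨δ, h1, h2⟩
  set F : Fin (D+1) → Δ := fun j => (hexFin j).choose with hF
  have hFspec : ∀ j : Fin (D+1), F j ∈ g^[(j : ℕ)] d' ∧ 2 ≤ (h' (g^[N] [F j])).count b :=
    fun j => (hexFin j).choose_spec
  have hinj : Function.Injective F := by
    intro j j' hjj
    obtain ⟨hm1, h21⟩ := hFspec j
    obtain ⟨hm2, h22⟩ := hFspec j'
    rw [hjj] at h21
    obtain ⟨x, y, z, hdec, hby⟩ := two_b h21
    have g1 := hgap j (F j') (hjj ▸ hm1) h21 y hby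
    have g2 := hgap j' (F j') hm2 h21 y hby
    rcases g1 with g1 | g1
    · exact absurd hdec (g1 x z)
    rcases g2 with g2 | g2
    · exact absurd hdec (g2 x z)
    have : (j : ℕ) = (j' : ℕ) := by omega
    exact Fin.ext this
  have hcardle := Fintype.card_le_of_injective F hinj
  rw [Fintype.card_fin] at hcardle
  omega
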